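/- For every tree T and subtree S of T, ζ_1(S) ≤ ζ_1(T). -/

import Mathlib

open scoped Classical
open Finset

variable {V : Type*}

/-- External vertex boundary: vertices outside `S` adjacent to some vertex of `S`. -/
noncomputable def vBoundary [Fintype V] (G : SimpleGraph V) (S : Finset V) : Finset V :=
  Finset.univ.filter fun v => v ∉ S ∧ ∃ u ∈ S, G.Adj u v

/-- Vertex isoperimetric number `Φ_V(G,k)`. -/
noncomputable def PhiV [Fintype V] (G : SimpleGraph V) (k : ℕ) : ℕ :=
  sInf {m | ∃ S : Finset V, S.card = k ∧ (vBoundary G S).card = m}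

/-- Number of edges with exactly one endpoint in `S`. -/
noncomputable def edgeBoundaryCard [Fintype V] (G : SimpleGraph V) (S : Finset V) : ℕ :=
  (Finset.univ.filter fun p : V × V => p.1 ∈ S ∧ p.2 ∉ S ∧ G.Adj p.1 p.2).card

/-- Edge isoperimetric number `Φ_E(G,k)`. -/
noncomputable def PhiE [Fintype V] (G : SimpleGraph V) (k : ℕ) : ℕ :=
  sInf {m | ∃ S : Finset V, S.card = k ∧ edgeBoundaryCard G S = m}

/-- Vertex isoperimetric peak `Φ_V(G)`. -/
noncomputable def PhiVPeak [Fintype V] (G : SimpleGraph V) : ℕ :=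
  (Finset.Icc 1 (Fintype.card V)).sup (PhiV G)

/-- Edge isoperimetric peak `Φ_E(G)`. -/
noncomputable def PhiEPeak [Fintype V] (G : SimpleGraph V) : ℕ :=
  (Finset.Icc 1 (Fintype.card V)).sup (PhiE G)

/-- The h-index of a function `f : ℕ → ℕ`: the largest `h` such that `f k ≥ h`
for `h` consecutive values `k1 ≤ k ≤ k1 + h - 1`. -/
noncomputable def hIndex (f : ℕ → ℕ) : ℕ :=
  sSup {h : ℕ | ∃ k1 : ℕ, ∀ k, k1 ≤ k → k < k1 + h → h ≤ f k}
/-- Closed neighborhood of `v` as a finset. -/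
noncomputable def closedNbr [Fintype V] (G : SimpleGraph V) (v : V) : Finset V :=
  insert v (Finset.univ.filter (G.Adj v))

/-- A robber walk: at each time step the robber stays put or moves to a neighbor. -/
def IsRWalk [Fintype V] (G : SimpleGraph V) (w : ℕ → V) : Prop :=
  ∀ t, w (t + 1) ∈ closedNbr G (w t)

/-- The history of answer vectors produced when the cops use strategy `σ`
(with `k` cops and answer function `A`) against the robber walk `w`:
`hist A σ w t` is the list of the first `t` answer vectors. In round `t` the
cops probe `σ` applied to the history so far, and each probe at `u` returns
`A u r` where `r` is the robber's current position. -/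
noncomputable def hist [Fintype V] {α : Type*} (A : V → V → α) {k : ℕ}
    (σ : List (Fin k → α) → (Fin k → V)) (w : ℕ → V) : ℕ → List (Fin k → α)
  | 0 => []
  | t + 1 => hist A σ w t ++ [fun i => A (σ (hist A σ w t) i) (w t)]

/-- The cop strategy `σ` wins the localization-type game with answer function `A`:
against every robber walk, at some round the answer history uniquely determines
the robber's current vertex. -/
def WinsLoc [Fintype V] {α : Type*} (G : SimpleGraph V) (A : V → V → α) (k : ℕ)
    (σ : List (Fin k → α) → (Fin k → V)) : Prop :=
  ∀ w, IsRWalk G w → ∃ t, ∀ w', IsRWalk G w' →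
    hist A σ w' (t + 1) = hist A σ w (t + 1) → w' t = w t

/-- The least number of cops winning the localization-type game with answer
function `A`. -/
noncomputable def locNum [Fintype V] {α : Type*} (G : SimpleGraph V)
    (A : V → V → α) : ℕ :=
  sInf {k | ∃ σ : List (Fin k → α) → (Fin k → V), WinsLoc G A k σ}

/-- One-visibility answer: `0` if the probe is on the robber, `1` if adjacent,
and no information (`none`, i.e. `∗`) otherwise. -/
noncomputable def ans1 [Fintype V] (G : SimpleGraph V) (u r : V) : Option ℕ :=
  if u = r then some 0 else if G.Adj u r then some 1 else none

/-- The one-visibility localization number `ζ₁(G)`. -/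
noncomputable def zeta1 [Fintype V] (G : SimpleGraph V) : ℕ :=
  locNum G (ans1 G)

/-- The localization number `ζ(G)`: probes return exact distances. -/
noncomputable def zeta [Fintype V] (G : SimpleGraph V) : ℕ :=
  locNum G G.dist

/-- The cop strategy `σ` wins the one-proximity game: against every robber walk
some probe eventually returns a distance other than `∗`. -/
def WinsProx [Fintype V] (G : SimpleGraph V) (k : ℕ)
    (σ : List (Fin k → Option ℕ) → (Fin k → V)) : Prop :=
  ∀ w, IsRWalk G w → ∃ t i, ans1 G (σ (hist (ans1 G) σ w t) i) (w t) ≠ none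

/-- The one-proximity number `prox₁(G)`. -/
noncomputable def proxNum [Fintype V] (G : SimpleGraph V) : ℕ :=
  sInf {k | ∃ σ : List (Fin k → Option ℕ) → (Fin k → V), WinsProx G k σ}


lemma ans1_eq_zero_iff [Fintype V] (G : SimpleGraph V) {u r : V} :
    ans1 G u r = some 0 ↔ u = r := by
  unfold ans1; split_ifs with h1 h2 <;> simp_all

lemma exists_win [Fintype V] (G : SimpleGraph V) :
    ∃ k, ∃ σ : List (Fin k → Option ℕ) → (Fin k → V), WinsLoc G (ans1 G) k σ := by
  refine ⟨Fintype.card V, fun _ i => (Fintype.equivFin V).symm i, ?_⟩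
  intro w hw
  refine ⟨0, fun w' hw' h => ?_⟩
  simp only [hist, List.nil_append] at h
  have h1 := List.head_eq_of_cons_eq h
  have := congrFun h1 ((Fintype.equivFin V) (w 0))
  simp only [Equiv.symm_apply_apply] at this
  rw [(ans1_eq_zero_iff G).mpr rfl] at this
  exact ((ans1_eq_zero_iff G).mp this).symm

lemma unique_nbr [Fintype V] (T : SimpleGraph V) (hT : T.IsTree) (s : Finset V)
    (hconn : (T.induce (↑s : Set V)).Connected) {u x y : V} (hu : u ∉ s)
    (hx : x ∈ s) (hy : y ∈ s) (hux : T.Adj u x) (huy : T.Adj u y) : x = y := by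
  classical
  by_contra hxy
  obtain ⟨p⟩ := hconn.preconnected ⟨x, by simpa using hx⟩ ⟨y, by simpa using hy⟩
  let p0 : T.Walk x y := p.map (SimpleGraph.Embedding.induce (↑s : Set V)).toHom
  have hsupp : ∀ v ∈ p0.support, v ∈ s := by
    intro v hv
    simp only [p0, SimpleGraph.Walk.support_map, List.mem_map] at hv
    obtain ⟨a, _, rfl⟩ := List.mem_map.mp (by rw [← SimpleGraph.Walk.support_map]; exact hv :
      v ∈ p.support.map (SimpleGraph.Embedding.induce (↑s : Set V)).toHom)
    exact a.2
  let Q1 : T.Path x y := p0.toPath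
  have hQ1 : u ∉ (Q1 : T.Walk x y).support := fun h =>
    hu (hsupp u (SimpleGraph.Walk.support_bypass_subset _ h))
  have hQ2path : (SimpleGraph.Walk.cons hux.symm (SimpleGraph.Walk.cons huy SimpleGraph.Walk.nil)).IsPath := by
    simp [SimpleGraph.Walk.isPath_def, hxy, hux.ne', huy.ne, fun h => hxy h]
  let Q2 : T.Path x y := ⟨_, hQ2path⟩
  have := SimpleGraph.isAcyclic_iff_path_unique.mp hT.IsAcyclic Q1 Q2
  apply hQ1
  rw [this]
  simp [Q2]

noncomputable def desS (T : SimpleGraph V) (s : Finset V) (hs : s.Nonempty) (u : V) :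
    ↥(↑s : Set V) :=
  if h : u ∈ s then ⟨u, by simpa using h⟩
  else if h2 : ∃ x ∈ s, T.Adj u x then ⟨h2.choose, by simpa using h2.choose_spec.1⟩
  else ⟨hs.choose, by simpa using hs.choose_spec⟩

lemma key [Fintype V] (T : SimpleGraph V) (hT : T.IsTree) (s : Finset V) (hs : s.Nonempty)
    (hconn : (T.induce (↑s : Set V)).Connected) (u : V) (r : ↥(↑s : Set V)) :
    (if u ∈ s then ans1 (T.induce (↑s : Set V)) (desS T s hs u) r
     else if (∃ x ∈ s, T.Adj u x) ∧ ans1 (T.induce (↑s : Set V)) (desS T s hs u) r = some 0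
       then some 1 else none) = ans1 T u ↑r := by
  by_cases hu : u ∈ s
  · rw [if_pos hu]
    rw [desS, dif_pos hu]
    unfold ans1
    by_cases h1 : u = ↑r
    · rw [if_pos (Subtype.ext h1), if_pos h1]
    · rw [if_neg (fun h => h1 (congrArg Subtype.val h)), if_neg h1]
      by_cases h2 : T.Adj u ↑r
      · rw [if_pos h2, if_pos (show (T.induce (↑s : Set V)).Adj ⟨u, by simpa using hu⟩ r from h2)]
      · rw [if_neg h2, if_neg (show ¬(T.induce (↑s : Set V)).Adj ⟨u, by simpa using hu⟩ r from h2)]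
  · rw [if_neg hu]
    have hne : u ≠ ↑r := fun h => hu (h ▸ (by simpa using r.2))
    rw [show ans1 T u ↑r = if T.Adj u ↑r then some 1 else none from by rw [ans1, if_neg hne]]
    by_cases hex : ∃ x ∈ s, T.Adj u x
    · rw [desS, dif_neg hu, dif_pos hex]
      have hx0 := hex.choose_spec
      have hz : ans1 (T.induce (↑s : Set V)) ⟨hex.choose, by simpa using hx0.1⟩ r = some 0
          ↔ hex.choose = ↑r := by
        rw [ans1_eq_zero_iff]; exact Subtype.ext_iff
      have hiff : T.Adj u ↑r ↔ hex.choose = ↑r := by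
        constructor
        · intro h; exact unique_nbr T hT s hconn hu hx0.1 (by simpa using r.2) hx0.2 h
        · intro h; exact h ▸ hx0.2
      by_cases hr : T.Adj u ↑r
      · rw [if_pos hr, if_pos ⟨hex, hz.mpr (hiff.mp hr)⟩]
      · rw [if_neg hr, if_neg]
        rintro ⟨-, h0⟩
        exact hr (hiff.mpr (hz.mp h0))
    · rw [if_neg, if_neg]
      · intro h; exact hex ⟨↑r, by simpa using r.2, h⟩
      · rintro ⟨h, -⟩; exact hex h

noncomputable def conv [Fintype V] (T : SimpleGraph V) (s : Finset V) {k : ℕ}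
    (p : Fin k → V) (a : Fin k → Option ℕ) : Fin k → Option ℕ :=
  fun i => if p i ∈ s then a i
    else if (∃ x ∈ s, T.Adj (p i) x) ∧ a i = some 0 then some 1 else none

noncomputable def transAux [Fintype V] (T : SimpleGraph V) (s : Finset V) {k : ℕ}
    (σ : List (Fin k → Option ℕ) → (Fin k → V)) :
    List (Fin k → Option ℕ) → List (Fin k → Option ℕ) → List (Fin k → Option ℕ)
  | acc, [] => acc
  | acc, a :: rest => transAux T s σ (acc ++ [conv T s (σ acc) a]) rest

noncomputable def transF [Fintype V] (T : SimpleGraph V) (s : Finset V) {k : ℕ}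
    (σ : List (Fin k → Option ℕ) → (Fin k → V)) (l : List (Fin k → Option ℕ)) :
    List (Fin k → Option ℕ) :=
  transAux T s σ [] l

lemma transAux_append [Fintype V] (T : SimpleGraph V) (s : Finset V) {k : ℕ}
    (σ : List (Fin k → Option ℕ) → (Fin k → V)) (l : List (Fin k → Option ℕ))
    (a : Fin k → Option ℕ) : ∀ acc,
    transAux T s σ acc (l ++ [a]) =
      transAux T s σ acc l ++ [conv T s (σ (transAux T s σ acc l)) a] := by
  induction l with
  | nil => intro acc; simp [transAux]
  | cons b l ih => intro acc; simp only [List.cons_append, transAux]; exact ih _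

lemma transF_append [Fintype V] (T : SimpleGraph V) (s : Finset V) {k : ℕ}
    (σ : List (Fin k → Option ℕ) → (Fin k → V)) (l : List (Fin k → Option ℕ))
    (a : Fin k → Option ℕ) :
    transF T s σ (l ++ [a]) = transF T s σ l ++ [conv T s (σ (transF T s σ l)) a] :=
  transAux_append T s σ l a []

/-- For a subtree `S` of a tree `T`, `ζ₁(S) ≤ ζ₁(T)`. -/
theorem zeta1_subtree_le [Fintype V] (T : SimpleGraph V) (hT : T.IsTree)
    (s : Finset V) (hs : s.Nonempty)
    (hconn : (T.induce (↑s : Set V)).Connected) :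
    zeta1 (T.induce (↑s : Set V)) ≤ zeta1 T := by
  classical
  have hne : {k | ∃ σ : List (Fin k → Option ℕ) → (Fin k → V),
      WinsLoc T (ans1 T) k σ}.Nonempty := by
    obtain ⟨k, σ, h⟩ := exists_win T
    exact ⟨k, σ, h⟩
  have hmem : zeta1 T ∈ {k | ∃ σ : List (Fin k → Option ℕ) → (Fin k → V),
      WinsLoc T (ans1 T) k σ} := Nat.sInf_mem hne
  obtain ⟨σ, hσ⟩ := hmem
  generalize hk : zeta1 T = k at σ hσ ⊢
  apply Nat.sInf_le
  set S := T.induce (↑s : Set V) with hS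
  set σ' : List (Fin k → Option ℕ) → (Fin k → ↥(↑s : Set V)) :=
    fun l i => desS T s hs (σ (transF T s σ l) i) with hσ'def
  refine ⟨σ', ?_⟩
  have hsim : ∀ (w0 : ℕ → ↥(↑s : Set V)), ∀ n,
      transF T s σ (hist (ans1 S) σ' w0 n) = hist (ans1 T) σ (fun m => ↑(w0 m)) n := by
    intro w0 n
    induction n with
    | zero => simp [hist, transF, transAux]
    | succ n ih =>
      rw [hist, hist, transF_append, ih]
      have hfun : conv T s (σ (hist (ans1 T) σ (fun m => ↑(w0 m)) n))
          (fun i => ans1 S (σ' (hist (ans1 S) σ' w0 n) i) (w0 n))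
          = fun i => ans1 T (σ (hist (ans1 T) σ (fun m => ↑(w0 m)) n) i) ↑(w0 n) := by
        funext i
        show (if σ (hist (ans1 T) σ (fun m => ↑(w0 m)) n) i ∈ s
            then ans1 S (σ' (hist (ans1 S) σ' w0 n) i) (w0 n)
            else if (∃ x ∈ s, T.Adj (σ (hist (ans1 T) σ (fun m => ↑(w0 m)) n) i) x)
              ∧ ans1 S (σ' (hist (ans1 S) σ' w0 n) i) (w0 n) = some 0
              then some 1 else none) = _
        simp only [hσ'def] at ih ⊢; simp only [ih]
        exact key T hT s hs hconn (σ (hist (ans1 T) σ (fun m => ↑(w0 m)) n) i) (w0 n)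
      rw [hfun]
  have hlift : ∀ (w0 : ℕ → ↥(↑s : Set V)), IsRWalk S w0 →
      IsRWalk T (fun m => ↑(w0 m)) := by
    intro w0 h t
    have := h t
    simp only [closedNbr, Finset.mem_insert, Finset.mem_filter, Finset.mem_univ,
      true_and] at this ⊢
    rcases this with h1 | h1
    · left; exact congrArg _ h1
    · right; exact h1
  intro w' hw'
  obtain ⟨t, ht⟩ := hσ _ (hlift w' hw')
  refine ⟨t, fun w'' hw'' hh => ?_⟩
  have : (fun m => (↑(w'' m) : V)) t = (fun m => (↑(w' m) : V)) t := by
    apply ht _ (hlift w'' hw'')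
    rw [← hsim, ← hsim, hh]
  exact Subtype.ext this
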